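/- arXiv:1008.0108 — 2 statements merged into one kernel-verified Lean document; each statement's English description precedes it below -/
import Mathlib

section
/- Let $T:X\to Y$ be a bounded linear operator between Hilbert spaces, $\{E_\lambda\}$ the spectral family of $T^*T$, and $\rho:(0,\|T\|^2]\to(0,\infty)$ continuous and strictly increasing. Suppose there exist constants $a>0$, $k>0$, and a family of piecewise continuous functions $r_\alpha:[0,\|T\|^2]\to\mathbb R$ ($\alpha\in(0,\alpha_0)$) satisfying $\rho(\lambda)|r_\alpha(\lambda)|\ge a\,\rho(\alpha)$ for all $0<k\alpha\le\lambda\le\|T\|^2$. If $x\in X$ satisfies $\|r_\alpha(T^*T)x\| = O(\rho(\alpha))$ as $\alpha\to 0^+$, then $\int_0^{\|T\|^2+}\rho^{-2}(\lambda)\,d\|E_\lambda x\|^2 < \infty$ and consequently $x\in\mathcal R(\rho(T^*T))$. -/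
open Filter Topology MeasureTheory

/-- converse result for source conditions, measure-theoretic form.
Here `μ` plays the role of the spectral measure `d‖E_λ x‖²` of `x` (supported on
`(0, ‖T‖²]`), so that `‖r_α(T^*T)x‖² = ∫ r_α(λ)² dμ(λ)`. If
`‖r_α(T^*T)x‖ = O(ρ(α))` as `α → 0⁺` and `ρ(λ)|r_α(λ)| ≥ a ρ(α)` for
`kα ≤ λ ≤ L`, then `∫ ρ(λ)⁻² dμ(λ) < ∞`, i.e. `x ∈ R(ρ(T^*T))`. -/
theorem stmt_8 {L α0 : ℝ} (hL : 0 < L) (hα0 : 0 < α0)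
    (ρ : ℝ → ℝ) (hρcont : ContinuousOn ρ (Set.Ioc 0 L))
    (hρmono : StrictMonoOn ρ (Set.Ioc 0 L))
    (hρpos : ∀ lam ∈ Set.Ioc (0:ℝ) L, 0 < ρ lam)
    (a k : ℝ) (ha : 0 < a) (hk : 0 < k)
    (r : ℝ → ℝ → ℝ)
    (hlow : ∀ α ∈ Set.Ioo (0:ℝ) α0, ∀ lam : ℝ,
      k * α ≤ lam → lam ≤ L → a * ρ α ≤ ρ lam * |r α lam|)
    (μ : Measure ℝ) [IsFiniteMeasure μ] (hsupp : μ (Set.Ioc 0 L)ᶜ = 0)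
    (C : ℝ) (hC : 0 < C) (αstar : ℝ) (hαstar : αstar ∈ Set.Ioc (0:ℝ) α0)
    (hO : ∀ α ∈ Set.Ioo (0:ℝ) αstar,
      (∫⁻ lam, ENNReal.ofReal ((r α lam) ^ 2) ∂μ) ≤ ENNReal.ofReal ((C * ρ α) ^ 2)) :
    (∫⁻ lam, ENNReal.ofReal (((ρ lam)⁻¹) ^ 2) ∂μ) < ⊤ := by
  obtain ⟨hαs0, hαsα0⟩ := hαstar
  set f : ℝ → ENNReal := fun lam => ENNReal.ofReal (((ρ lam)⁻¹) ^ 2) with hf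
  set b : ℝ := min αstar L / 2 with hb
  have hb0 : 0 < b := by positivity
  have hbαs : b < αstar := lt_of_le_of_lt (by
      have : min αstar L ≤ αstar := min_le_left _ _
      linarith) (by linarith : αstar / 2 < αstar)
  have hbL : b ≤ L := by
    have : min αstar L ≤ L := min_le_right _ _
    linarith
  set αseq : ℕ → ℝ := fun n => b / (n + 1) with hαseq
  have hαseq_pos : ∀ n, 0 < αseq n := fun n => by positivity
  have hαseq_le : ∀ n, αseq n ≤ b := by
    intro n
    rw [hαseq]
    rw [div_le_iff₀ (by positivity)]
    nlinarith [hb0, (Nat.cast_nonneg n : (0:ℝ) ≤ n)]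
  have hαseq_mem : ∀ n, αseq n ∈ Set.Ioo (0:ℝ) αstar :=
    fun n => ⟨hαseq_pos n, lt_of_le_of_lt (hαseq_le n) hbαs⟩
  have hαseq_memL : ∀ n, αseq n ∈ Set.Ioc (0:ℝ) L :=
    fun n => ⟨hαseq_pos n, le_trans (hαseq_le n) hbL⟩
  set s : ℕ → Set ℝ := fun n => Set.Ioc (k * αseq n) L with hs
  -- key bound on each piece
  have key : ∀ n, (∫⁻ lam in s n, f lam ∂μ) ≤ ENNReal.ofReal ((C / a) ^ 2) := by
    intro n
    set α := αseq n with hα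
    have hρα : 0 < ρ α := hρpos α (hαseq_memL n)
    set c : ENNReal := ENNReal.ofReal (((a * ρ α) ^ 2)⁻¹) with hc
    have hpt : ∀ lam ∈ s n, f lam ≤ c * ENNReal.ofReal ((r α lam) ^ 2) := by
      intro lam hlam
      obtain ⟨h1, h2⟩ := hlam
      have hlampos : 0 < lam := lt_of_le_of_lt (by positivity) h1
      have hρlam : 0 < ρ lam := hρpos lam ⟨hlampos, h2⟩
      have hlb := hlow α ⟨hαseq_pos n, lt_of_lt_of_le (hαseq_mem n).2 hαsα0⟩ lam h1.le h2
      have hinv : (ρ lam)⁻¹ ≤ |r α lam| / (a * ρ α) := by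
        rw [le_div_iff₀ (by positivity), inv_mul_le_iff₀ hρlam]
        nlinarith
      have hsq : ((ρ lam)⁻¹) ^ 2 ≤ (r α lam) ^ 2 * ((a * ρ α) ^ 2)⁻¹ := by
        have h0 : (0:ℝ) ≤ (ρ lam)⁻¹ := by positivity
        have := mul_self_le_mul_self h0 hinv
        calc ((ρ lam)⁻¹) ^ 2 ≤ (|r α lam| / (a * ρ α)) ^ 2 := by
              rw [sq, sq]; exact this
          _ = (r α lam) ^ 2 * ((a * ρ α) ^ 2)⁻¹ := by
              rw [div_pow, sq_abs, div_eq_mul_inv]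
      calc f lam ≤ ENNReal.ofReal ((r α lam) ^ 2 * ((a * ρ α) ^ 2)⁻¹) :=
            ENNReal.ofReal_le_ofReal hsq
        _ = c * ENNReal.ofReal ((r α lam) ^ 2) := by
            rw [ENNReal.ofReal_mul (by positivity), hc, mul_comm]
    calc (∫⁻ lam in s n, f lam ∂μ)
        ≤ ∫⁻ lam in s n, c * ENNReal.ofReal ((r α lam) ^ 2) ∂μ := by
          refine lintegral_mono_ae ?_
          filter_upwards [MeasureTheory.ae_restrict_mem (measurableSet_Ioc)] with lam hlam
          exact hpt lam hlam
      _ = c * ∫⁻ lam in s n, ENNReal.ofReal ((r α lam) ^ 2) ∂μ :=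
          lintegral_const_mul' c _ ENNReal.ofReal_ne_top
      _ ≤ c * ∫⁻ lam, ENNReal.ofReal ((r α lam) ^ 2) ∂μ := by
          gcongr
          exact Measure.restrict_le_self
      _ ≤ c * ENNReal.ofReal ((C * ρ α) ^ 2) := by
          gcongr
          exact hO α (hαseq_mem n)
      _ = ENNReal.ofReal ((C / a) ^ 2) := by
          rw [hc, ← ENNReal.ofReal_mul (by positivity)]
          congr 1
          field_simp
  -- f is a.e. measurable
  have hres : μ.restrict (Set.Ioc 0 L) = μ :=
    Measure.restrict_eq_self_of_ae_mem (mem_ae_iff.mpr hsupp)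
  have hfm : AEMeasurable f μ := by
    rw [← hres]
    refine ContinuousOn.aemeasurable ?_ measurableSet_Ioc
    refine ENNReal.continuous_ofReal.comp_continuousOn ?_
    exact (hρcont.inv₀ (fun x hx => (hρpos x hx).ne')).pow 2
  set g : ℕ → ℝ → ENNReal := fun n => (s n).indicator f with hg
  have hgm : ∀ n, AEMeasurable (g n) μ := fun n => hfm.indicator measurableSet_Ioc
  have hsmono : ∀ m n, m ≤ n → s m ⊆ s n := by
    intro m n hmn x hx
    refine ⟨lt_of_le_of_lt ?_ hx.1, hx.2⟩
    have : αseq n ≤ αseq m := by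
      rw [hαseq]
      apply div_le_div_of_nonneg_left hb0.le (by positivity)
      have : (m:ℝ) ≤ n := Nat.cast_le.mpr hmn
      linarith
    nlinarith
  have hgmono : ∀ x, Monotone fun n => g n x := by
    intro x m n hmn
    exact Set.indicator_le_indicator_of_subset (hsmono m n hmn) (fun _ => zero_le) x
  have hsup : ∀ x, (⨆ n, g n x) = (Set.Ioc (0:ℝ) L).indicator f x := by
    intro x
    by_cases hx : x ∈ Set.Ioc (0:ℝ) L
    · rw [Set.indicator_of_mem hx]
      obtain ⟨hx1, hx2⟩ := hx
      obtain ⟨n, hn⟩ := exists_nat_gt (k * b / x)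
      have hn' : k * αseq n < x := by
        have hxpos : 0 < x := hx1
        rw [hαseq]
        have h1 : k * b / x < n + 1 := lt_of_le_of_lt (le_of_lt hn) (by linarith)
        rw [div_lt_iff₀ hxpos] at h1
        rw [mul_div_assoc', div_lt_iff₀ (by positivity : (0:ℝ) < (n:ℝ)+1)]
        nlinarith
      apply le_antisymm
      · exact iSup_le fun m => Set.indicator_le_self _ _ x
      · refine le_trans ?_ (le_iSup _ n)
        have hmem : x ∈ s n := ⟨hn', hx2⟩
        rw [hg]
        simp only
        rw [Set.indicator_of_mem hmem]
    · rw [Set.indicator_of_notMem hx]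
      refine le_antisymm (iSup_le fun n => ?_) zero_le
      rw [hg]
      simp only
      rw [Set.indicator_of_notMem]
      intro hmem
      exact hx ⟨lt_trans (by positivity) hmem.1, hmem.2⟩
  have hcongr : (∫⁻ lam, f lam ∂μ) = ∫⁻ lam, (Set.Ioc (0:ℝ) L).indicator f lam ∂μ := by
    refine lintegral_congr_ae ?_
    have hae : ∀ᵐ lam ∂μ, lam ∈ Set.Ioc (0:ℝ) L := mem_ae_iff.mpr hsupp
    filter_upwards [hae] with lam hlam
    rw [Set.indicator_of_mem hlam]
  calc (∫⁻ lam, ENNReal.ofReal (((ρ lam)⁻¹) ^ 2) ∂μ)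
      = ∫⁻ lam, (Set.Ioc (0:ℝ) L).indicator f lam ∂μ := hcongr
    _ = ∫⁻ lam, ⨆ n, g n lam ∂μ := by
        refine lintegral_congr fun lam => (hsup lam).symm
    _ = ⨆ n, ∫⁻ lam, g n lam ∂μ :=
        lintegral_iSup' hgm (Filter.Eventually.of_forall hgmono)
    _ = ⨆ n, ∫⁻ lam in s n, f lam ∂μ := by
        refine iSup_congr fun n => ?_
        rw [hg]
        exact lintegral_indicator measurableSet_Ioc f
    _ ≤ ENNReal.ofReal ((C / a) ^ 2) := iSup_le key
    _ < ⊤ := ENNReal.ofReal_lt_top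
end

section
/- Let $\rho_1(\alpha)=\alpha^{\mu_0}$ with $\mu_0>0$ and let $\tilde\rho:(0,L]\to(0,\infty)$ be increasing. Suppose both $\rho_1$ and $\tilde\rho$ are maximal qualifications of a family $\{r_\alpha\}$, i.e., there exist constants $\gamma,\tilde\gamma>0$ with $\sup_{\lambda\in(0,L]}|r_\alpha(\lambda)|\rho_1(\lambda)\le\gamma\rho_1(\alpha)$ and $\sup_{\lambda\in(0,L]}|r_\alpha(\lambda)|\tilde\rho(\lambda)\le\tilde\gamma\tilde\rho(\alpha)$ for all $\alpha\in(0,\alpha_0)$, and for every $\lambda\in(0,L]$ there exist $c(\lambda),\tilde c(\lambda)>0$ with $\inf_{\alpha\in(0,\alpha_0)}|r_\alpha(\lambda)|/\rho_1(\alpha)\ge c(\lambda)$ and $\inf_{\alpha\in(0,\alpha_0)}|r_\alpha(\lambda)|/\tilde\rho(\alpha)\ge\tilde c(\lambda)$. Then $\rho_1$ and $\tilde\rho$ are equivalent: there exist constants $k,\tilde k>0$ such that $k\,\alpha^{\mu_0}\le\tilde\rho(\alpha)\le\tilde k\,\alpha^{\mu_0}$ for every $\alpha\in(0,\alpha_0)$.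 -/
/-- two maximal qualifications `α^{μ₀}` and `ρ'` of the same family
of residuals `r_α` are equivalent up to multiplicative constants. -/
theorem stmt_18 (L α0 μ0 : ℝ) (hL : 0 < L) (hα0 : 0 < α0) (hα0L : α0 ≤ L)
    (hμ0 : 0 < μ0)
    (ρ' : ℝ → ℝ) (hρ'mono : MonotoneOn ρ' (Set.Ioc 0 L))
    (hρ'pos : ∀ t ∈ Set.Ioc (0:ℝ) L, 0 < ρ' t)
    (r : ℝ → ℝ → ℝ) (γ γ' : ℝ) (hγ : 0 < γ) (hγ' : 0 < γ')
    (hup1 : ∀ α ∈ Set.Ioo (0:ℝ) α0, ∀ lam ∈ Set.Ioc (0:ℝ) L,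
      |r α lam| * lam ^ μ0 ≤ γ * α ^ μ0)
    (hup2 : ∀ α ∈ Set.Ioo (0:ℝ) α0, ∀ lam ∈ Set.Ioc (0:ℝ) L,
      |r α lam| * ρ' lam ≤ γ' * ρ' α)
    (hlow1 : ∀ lam ∈ Set.Ioc (0:ℝ) L, ∃ cl > 0, ∀ α ∈ Set.Ioo (0:ℝ) α0,
      cl * α ^ μ0 ≤ |r α lam|)
    (hlow2 : ∀ lam ∈ Set.Ioc (0:ℝ) L, ∃ cl > 0, ∀ α ∈ Set.Ioo (0:ℝ) α0,
      cl * ρ' α ≤ |r α lam|) :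
    ∃ k > 0, ∃ k' > 0, ∀ α ∈ Set.Ioo (0:ℝ) α0,
      k * α ^ μ0 ≤ ρ' α ∧ ρ' α ≤ k' * α ^ μ0 := by
  have hLmem : L ∈ Set.Ioc (0:ℝ) L := ⟨hL, le_refl L⟩
  obtain ⟨c1, hc1, h1⟩ := hlow1 L hLmem
  obtain ⟨c2, hc2, h2⟩ := hlow2 L hLmem
  have hLpow : (0:ℝ) < L ^ μ0 := Real.rpow_pos_of_pos hL μ0 |>.trans_le (le_of_eq rfl)
  have hLpow' : (0:ℝ) < L ^ μ0 := Real.rpow_pos_of_pos hL μ0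
  have hρL : 0 < ρ' L := hρ'pos L hLmem
  refine ⟨c1 * ρ' L / γ', by positivity, γ / (c2 * L ^ μ0), by positivity, ?_⟩
  intro α hα
  have hαmem : α ∈ Set.Ioc (0:ℝ) L := ⟨hα.1, le_trans hα.2.le hα0L⟩
  have hρα : 0 < ρ' α := hρ'pos α hαmem
  constructor
  · -- c1 * α^μ0 ≤ |r α L|, and |r α L| * ρ' L ≤ γ' * ρ' α
    have hA := h1 α hα
    have hB := hup2 α hα L hLmem
    have : c1 * α ^ μ0 * ρ' L ≤ γ' * ρ' α :=
      le_trans (mul_le_mul_of_nonneg_right hA hρL.le) hB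
    rw [div_mul_eq_mul_div, div_le_iff₀ hγ']
    linarith [this]
  · -- c2 * ρ' α ≤ |r α L|, and |r α L| * L^μ0 ≤ γ * α^μ0
    have hA := h2 α hα
    have hB := hup1 α hα L hLmem
    have : c2 * ρ' α * L ^ μ0 ≤ γ * α ^ μ0 :=
      le_trans (mul_le_mul_of_nonneg_right hA hLpow'.le) hB
    rw [div_mul_eq_mul_div, le_div_iff₀ (by positivity)]
    linarith [this]
end
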